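/- arXiv:1704.04492 — 2 statements merged into one kernel-verified Lean document; each statement's English description precedes it below -/
import Mathlib

section
/- Let Ω ⊆ ℝ^n be open and connected, f ∈ C²(Ω, ℝ) with Df never vanishing on Ω, and ν : ℝ → ℝ^N a C² curve with |ν'| ≡ 1 on f(Ω) and ⟨ν'', ν'⟩ ≡ 0 on f(Ω). Set u = ν ∘ f. If u satisfies [[Du]]^⊥ Δu = 0 in Ω, then ν'' ∘ f ≡ 0 on Ω; consequently ν is affine on the interval f(Ω) and u(Ω) is contained in an affine line of ℝ^N. -/
open Matrix Set
open scoped RealInnerProductSpace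

/-- The orthogonal projection of ℝ^N onto the orthogonal complement of the range of X. -/
noncomputable def perpProj {N n : ℕ} (X : Matrix (Fin N) (Fin n) ℝ)
    (w : EuclideanSpace ℝ (Fin N)) : EuclideanSpace ℝ (Fin N) :=
  (Submodule.orthogonalProjectionOnto (LinearMap.range (Matrix.toEuclideanLin X))ᗮ w :
    EuclideanSpace ℝ (Fin N))

/-- The gradient matrix Du(x) of u : ℝ^n → ℝ^N. -/
noncomputable def gradMatrix {N n : ℕ} (u : EuclideanSpace ℝ (Fin n) → EuclideanSpace ℝ (Fin N))
    (x : EuclideanSpace ℝ (Fin n)) : Matrix (Fin N) (Fin n) ℝ :=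
  Matrix.of fun α i => fderiv ℝ u x (EuclideanSpace.single i 1) α

/-- The Laplacian Δu(x) of u : ℝ^n → ℝ^N. -/
noncomputable def lapl {N n : ℕ} (u : EuclideanSpace ℝ (Fin n) → EuclideanSpace ℝ (Fin N))
    (x : EuclideanSpace ℝ (Fin n)) : EuclideanSpace ℝ (Fin N) :=
  ∑ i, fderiv ℝ (fun y => fderiv ℝ u y (EuclideanSpace.single i 1)) x (EuclideanSpace.single i 1)

/-- if u = ν ∘ f with f C², Df ≠ 0 on the open connected set Ω, ν a C²
unit-speed curve on f(Ω) with ν'' ⊥ ν' there, and u solves [[Du]]^⊥ Δu = 0 in Ω, then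
ν'' ∘ f ≡ 0 on Ω, ν is affine on f(Ω) and u(Ω) is contained in an affine line. -/
theorem stmt6 {N n : ℕ} (Ω : Set (EuclideanSpace ℝ (Fin n)))
    (hΩ : IsOpen Ω) (hconn : IsConnected Ω)
    (f : EuclideanSpace ℝ (Fin n) → ℝ) (hf : ContDiffOn ℝ 2 f Ω)
    (hDf : ∀ x ∈ Ω, fderiv ℝ f x ≠ 0)
    (ν : ℝ → EuclideanSpace ℝ (Fin N)) (hν : ContDiff ℝ 2 ν)
    (hunit : ∀ t ∈ f '' Ω, ‖deriv ν t‖ = 1)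
    (horth : ∀ t ∈ f '' Ω, ⟪deriv (deriv ν) t, deriv ν t⟫ = 0)
    (u : EuclideanSpace ℝ (Fin n) → EuclideanSpace ℝ (Fin N)) (hu : u = ν ∘ f)
    (hPDE : ∀ x ∈ Ω, perpProj (gradMatrix u x) (lapl u x) = 0) :
    (∀ x ∈ Ω, deriv (deriv ν) (f x) = 0) ∧
    (∃ c d : EuclideanSpace ℝ (Fin N), ∀ t ∈ f '' Ω, ν t = c + t • d) ∧
    (∃ p v : EuclideanSpace ℝ (Fin N), v ≠ 0 ∧ ∀ x ∈ Ω, ∃ s : ℝ, u x = p + s • v) := by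
  have hνd : Differentiable ℝ ν := hν.differentiable two_ne_zero
  have hν1 : ContDiff ℝ 1 (deriv ν) := by
    have h2 : (2 : WithTop ℕ∞) = 1 + 1 := by norm_num
    exact (contDiff_succ_iff_deriv.mp (h2 ▸ hν)).2.2
  have hν1d : Differentiable ℝ (deriv ν) := hν1.differentiable one_ne_zero
  have hfd : ∀ y ∈ Ω, DifferentiableAt ℝ f y := fun y hy =>
    (hf.differentiableOn two_ne_zero).differentiableAt (hΩ.mem_nhds hy)
  -- first derivative of u on Ω
  have h1 : ∀ y ∈ Ω, HasFDerivAt u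
      ((ContinuousLinearMap.smulRight (1 : ℝ →L[ℝ] ℝ) (deriv ν (f y))).comp (fderiv ℝ f y)) y := by
    intro y hy
    rw [hu]
    exact (hνd (f y)).hasDerivAt.hasFDerivAt.comp y (hfd y hy).hasFDerivAt
  have h1' : ∀ y ∈ Ω, ∀ z, fderiv ℝ u y z = fderiv ℝ f y z • deriv ν (f y) := by
    intro y hy z
    rw [(h1 y hy).fderiv]
    simp
  -- KEY: pointwise vanishing of ν'' ∘ f
  have key : ∀ x ∈ Ω, deriv (deriv ν) (f x) = 0 := by
    intro x hx
    set t := f x with ht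
    set v := deriv ν t with hv
    set w := deriv (deriv ν) t with hwdef
    set g : Fin n → ℝ := fun i => fderiv ℝ f x (EuclideanSpace.single i 1) with hg
    have hgne : ∃ i, g i ≠ 0 := by
      by_contra h
      push_neg at h
      apply hDf x hx
      apply ContinuousLinearMap.coe_injective
      apply Module.Basis.ext (EuclideanSpace.basisFun (Fin n) ℝ).toBasis
      intro i
      have := h i
      simpa [EuclideanSpace.basisFun_apply] using this
    have hb : (0:ℝ) < ∑ i, g i * g i := by
      obtain ⟨i, hi⟩ := hgne
      exact Finset.sum_pos' (fun j _ => mul_self_nonneg _)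
        ⟨i, Finset.mem_univ i, mul_self_pos.mpr hi⟩
    -- entries of the gradient matrix
    have hX : ∀ α i, gradMatrix u x α i = g i * v α := by
      intro α i
      have := h1' x hx (EuclideanSpace.single i 1)
      simp only [gradMatrix, Matrix.of_apply]
      rw [this]
      simp [hg, hv, ht]
    -- the range of the gradient is the span of v
    have hvnorm : ‖v‖ = 1 := hunit t ⟨x, hx, rfl⟩
    have hvne : v ≠ 0 := by
      intro h; rw [h, norm_zero] at hvnorm; exact one_ne_zero hvnorm.symm
    have happly : ∀ y : EuclideanSpace ℝ (Fin n),
        Matrix.toEuclideanLin (gradMatrix u x) y = (∑ i, g i * y i) • v := by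
      intro y
      apply PiLp.ext
      intro α
      rw [Matrix.toEuclideanLin_apply]
      simp only [PiLp.toLp_apply, Matrix.mulVec, dotProduct, hX,
        PiLp.smul_apply, smul_eq_mul, Finset.sum_mul]
      exact Finset.sum_congr rfl fun i _ => by ring
    have hrange : LinearMap.range (Matrix.toEuclideanLin (gradMatrix u x)) = (ℝ ∙ v) := by
      apply le_antisymm
      · rintro z ⟨y, rfl⟩
        rw [happly y]
        exact Submodule.smul_mem _ _ (Submodule.mem_span_singleton_self v)
      · rw [Submodule.span_singleton_le_iff_mem]
        refine ⟨(∑ i, g i * g i)⁻¹ • (WithLp.equiv 2 (Fin n → ℝ)).symm g, ?_⟩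
        rw [_root_.map_smul, happly]
        rw [smul_smul]
        have : (∑ i, g i * ((WithLp.equiv 2 (Fin n → ℝ)).symm g) i) = ∑ i, g i * g i := rfl
        rw [this, inv_mul_cancel₀ (ne_of_gt hb), one_smul]
    -- second derivatives
    have hDf1 : ContDiffOn ℝ 1 (fun y => fderiv ℝ f y) Ω := hf.fderiv_of_isOpen hΩ le_rfl
    have hsecond : ∀ i : Fin n,
        fderiv ℝ (fun y => fderiv ℝ u y (EuclideanSpace.single i 1)) x (EuclideanSpace.single i 1)
        = (fderiv ℝ (fun y => fderiv ℝ f y (EuclideanSpace.single i 1)) x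
            (EuclideanSpace.single i 1)) • v + (g i * g i) • w := by
      intro i
      set e := (EuclideanSpace.single i (1:ℝ)) with he
      -- φ : y ↦ ∂ᵢ f y, scalar
      have hφd : DifferentiableAt ℝ (fun y => fderiv ℝ f y e) x := by
        have hL : DifferentiableAt ℝ (fun y => fderiv ℝ f y) x :=
          (hDf1.differentiableOn one_ne_zero).differentiableAt (hΩ.mem_nhds hx)
        exact hL.clm_apply (differentiableAt_const e)
      -- ψ : y ↦ deriv ν (f y)
      have hψ : HasFDerivAt (fun y => deriv ν (f y))
          ((ContinuousLinearMap.smulRight (1 : ℝ →L[ℝ] ℝ) w).comp (fderiv ℝ f x)) x :=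
        (hν1d t).hasDerivAt.hasFDerivAt.comp x (hfd x hx).hasFDerivAt
      have hsm : HasFDerivAt (fun y => (fderiv ℝ f y e) • (deriv ν (f y)))
          ((fderiv ℝ f x e) • ((ContinuousLinearMap.smulRight (1 : ℝ →L[ℝ] ℝ) w).comp
              (fderiv ℝ f x)) +
            (fderiv ℝ (fun y => fderiv ℝ f y e) x).smulRight (deriv ν (f x))) x :=
        hφd.hasFDerivAt.smul hψ
      have hev : (fun y => fderiv ℝ u y e) =ᶠ[nhds x] fun y => (fderiv ℝ f y e) • deriv ν (f y) := by
        filter_upwards [hΩ.mem_nhds hx] with y hy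
        exact h1' y hy e
      rw [hev.fderiv_eq, hsm.fderiv]
      simp only [ContinuousLinearMap.add_apply, ContinuousLinearMap.smul_apply,
        ContinuousLinearMap.comp_apply, ContinuousLinearMap.smulRight_apply,
        ContinuousLinearMap.one_apply, smul_smul]
      exact add_comm _ _
    -- the Laplacian
    have hlapl : lapl u x = (∑ i, fderiv ℝ (fun y => fderiv ℝ f y (EuclideanSpace.single i 1)) x
        (EuclideanSpace.single i 1)) • v + (∑ i, g i * g i) • w := by
      rw [lapl]
      rw [Finset.sum_congr rfl (fun i _ => hsecond i)]
      rw [Finset.sum_add_distrib, ← Finset.sum_smul, ← Finset.sum_smul]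
    -- orthogonality facts
    set K : Submodule ℝ (EuclideanSpace ℝ (Fin N)) := ℝ ∙ v with hK
    have hwK : w ∈ Kᗮ := by
      rw [hK, Submodule.mem_orthogonal_singleton_iff_inner_right]
      rw [real_inner_comm]
      exact horth t ⟨x, hx, rfl⟩
    have hvK : v ∈ K := Submodule.mem_span_singleton_self v
    have hvR : v ∈ LinearMap.range (Matrix.toEuclideanLin (gradMatrix u x)) := by
      rw [hrange]; exact hvK
    have hwR : w ∈ (LinearMap.range (Matrix.toEuclideanLin (gradMatrix u x)))ᗮ := by
      rw [hrange]; exact hwK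
    have hPDEx := hPDE x hx
    rw [perpProj, hlapl] at hPDEx
    set a := (∑ i, fderiv ℝ (fun y => fderiv ℝ f y (EuclideanSpace.single i 1)) x
        (EuclideanSpace.single i 1)) with ha
    have : (Submodule.orthogonalProjectionOnto (LinearMap.range (Matrix.toEuclideanLin (gradMatrix u x)))ᗮ (a • v + (∑ i, g i * g i) • w) :
        EuclideanSpace ℝ (Fin N)) = (∑ i, g i * g i) • w := by
      rw [map_add, _root_.map_smul, _root_.map_smul]
      rw [Submodule.orthogonalProjectionOnto_apply_of_mem_orthogonal
        (Submodule.le_orthogonal_orthogonal _ hvR)]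
      push_cast
      rw [← Submodule.starProjection_apply, Submodule.starProjection_eq_self_iff.mpr hwR]
      simp
    rw [this] at hPDEx
    have := smul_eq_zero.mp hPDEx
    rcases this with h | h
    · exact absurd h (ne_of_gt hb)
    · exact h
  refine ⟨key, ?_⟩
  -- the image is convex
  have hS : Convex ℝ (f '' Ω) :=
    convex_iff_ordConnected.mpr
      ((hconn.image f (hf.continuousOn)).isPreconnected.ordConnected)
  have hzero : ∀ s ∈ f '' Ω, deriv (deriv ν) s = 0 := by
    rintro s ⟨x, hx, rfl⟩; exact key x hx
  have hfzero : ∀ s ∈ f '' Ω, fderiv ℝ (deriv ν) s = 0 := by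
    intro s hs
    have hd : HasDerivAt (deriv ν) 0 s := hzero s hs ▸ (hν1d s).hasDerivAt
    have := hd.hasFDerivAt.fderiv
    rw [this]
    ext r
    simp
  -- deriv ν is constant on f '' Ω
  obtain ⟨x₀, hx₀⟩ := hconn.nonempty
  have ht₀ : f x₀ ∈ f '' Ω := ⟨x₀, hx₀, rfl⟩
  set d := deriv ν (f x₀) with hd
  have hconst : ∀ s ∈ f '' Ω, deriv ν s = d := by
    intro s hs
    have := Convex.norm_image_sub_le_of_norm_fderiv_le (C := 0)
      (fun y hy => hν1d y) (fun y (hy : y ∈ f '' Ω) => by rw [hfzero y hy]; simp) hS ht₀ hs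
    rw [zero_mul] at this
    have := norm_le_zero_iff.mp this
    rwa [sub_eq_zero] at this
  set c := ν (f x₀) - (f x₀) • d with hc
  have haff : ∀ s ∈ f '' Ω, ν s = c + s • d := by
    intro s hs
    have hGd : ∀ y : ℝ, DifferentiableAt ℝ (fun r => ν r - r • d) y := fun y =>
      (hνd y).sub ((differentiable_id.smul_const d) y)
    have hGf : ∀ y ∈ f '' Ω, fderiv ℝ (fun r => ν r - r • d) y = 0 := by
      intro y hy
      have h1 : HasDerivAt (fun r : ℝ => r • d) d y := by
        simpa using (hasDerivAt_id y).smul_const d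
      have h2 : HasDerivAt (fun r => ν r - r • d) 0 y := by
        have := ((hνd y).hasDerivAt.sub h1)
        rwa [hconst y hy, sub_self] at this
      rw [h2.hasFDerivAt.fderiv]
      ext r; simp
    have := Convex.norm_image_sub_le_of_norm_fderiv_le (C := 0)
      (fun y _ => hGd y) (fun y hy => by rw [hGf y hy]; simp) hS ht₀ hs
    rw [zero_mul] at this
    have := norm_le_zero_iff.mp this
    rw [sub_eq_zero] at this
    have : ν s - s • d = ν (f x₀) - (f x₀) • d := this
    rw [hc, ← this]
    abel
  refine ⟨⟨c, d, haff⟩, c, d, ?_, ?_⟩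
  · intro h
    have := hunit (f x₀) ht₀
    rw [← hd, h, norm_zero] at this
    exact one_ne_zero this.symm
  · intro x hx
    exact ⟨f x, by rw [hu]; exact haff (f x) ⟨x, hx, rfl⟩⟩
end

section
/- Let u ∈ C²(Ω, ℝ^N) with Ω ⊆ ℝ^n open, and suppose u solves the normalized p-Laplace system Du ⊗ Du : D²u + (|Du|²/(p-2)) Δu = 0 in Ω for some p ∈ (2,∞). Then u solves both systems: Du ⊗ Du : D²u + (|Du|²/(p-2)) [[Du]]^∥ Δu = 0 and |Du|² [[Du]]^⊥ Δu = 0 in Ω. -/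
open Matrix Set

/-- Orthogonal projection onto the range of X. -/
noncomputable def parProj {N n : ℕ} (X : Matrix (Fin N) (Fin n) ℝ)
    (w : EuclideanSpace ℝ (Fin N)) : EuclideanSpace ℝ (Fin N) :=
  (Submodule.orthogonalProjectionOnto (LinearMap.range (Matrix.toEuclideanLin X)) w :
    EuclideanSpace ℝ (Fin N))

/-- a C² solution of the normalized p-Laplace system
Du ⊗ Du : D²u + (|Du|²/(p-2)) Δu = 0, p ∈ (2,∞), solves both
Du ⊗ Du : D²u + (|Du|²/(p-2)) [[Du]]^∥ Δu = 0 and |Du|² [[Du]]^⊥ Δu = 0 in Ω. -/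
theorem stmt12 {N n : ℕ} (Ω : Set (EuclideanSpace ℝ (Fin n))) (hΩ : IsOpen Ω)
    (p : ℝ) (hp : 2 < p)
    (u : EuclideanSpace ℝ (Fin n) → EuclideanSpace ℝ (Fin N)) (hu : ContDiffOn ℝ 2 u Ω)
    (hPDE : ∀ x ∈ Ω, ∀ α : Fin N,
      (∑ β : Fin N, ∑ i : Fin n, ∑ j : Fin n,
          fderiv ℝ u x (EuclideanSpace.single i 1) α *
          fderiv ℝ u x (EuclideanSpace.single j 1) β *
          fderiv ℝ (fun y => fderiv ℝ u y (EuclideanSpace.single j 1)) x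
            (EuclideanSpace.single i 1) β)
        + ((∑ γ : Fin N, ∑ i : Fin n, (fderiv ℝ u x (EuclideanSpace.single i 1) γ) ^ 2) / (p - 2)) *
            lapl u x α = 0) :
    (∀ x ∈ Ω, ∀ α : Fin N,
      (∑ β : Fin N, ∑ i : Fin n, ∑ j : Fin n,
          fderiv ℝ u x (EuclideanSpace.single i 1) α *
          fderiv ℝ u x (EuclideanSpace.single j 1) β *
          fderiv ℝ (fun y => fderiv ℝ u y (EuclideanSpace.single j 1)) x
            (EuclideanSpace.single i 1) β)
        + ((∑ γ : Fin N, ∑ i : Fin n, (fderiv ℝ u x (EuclideanSpace.single i 1) γ) ^ 2) / (p - 2)) *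
            parProj (gradMatrix u x) (lapl u x) α = 0) ∧
    (∀ x ∈ Ω,
      (∑ γ : Fin N, ∑ i : Fin n, (fderiv ℝ u x (EuclideanSpace.single i 1) γ) ^ 2) •
        perpProj (gradMatrix u x) (lapl u x) = 0) := by
  have hp2 : p - 2 ≠ 0 := by linarith
  have key : ∀ x ∈ Ω,
      (∀ α : Fin N,
        (∑ β : Fin N, ∑ i : Fin n, ∑ j : Fin n,
            fderiv ℝ u x (EuclideanSpace.single i 1) α *
            fderiv ℝ u x (EuclideanSpace.single j 1) β *
            fderiv ℝ (fun y => fderiv ℝ u y (EuclideanSpace.single j 1)) x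
              (EuclideanSpace.single i 1) β)
          + ((∑ γ : Fin N, ∑ i : Fin n, (fderiv ℝ u x (EuclideanSpace.single i 1) γ) ^ 2) / (p - 2)) *
              parProj (gradMatrix u x) (lapl u x) α = 0) ∧
      ((∑ γ : Fin N, ∑ i : Fin n, (fderiv ℝ u x (EuclideanSpace.single i 1) γ) ^ 2) •
        perpProj (gradMatrix u x) (lapl u x) = 0) := by
    intro x hx
    set X := gradMatrix u x with hX
    set S := LinearMap.range (Matrix.toEuclideanLin X) with hS
    set L := lapl u x with hL
    set s : ℝ := ∑ γ : Fin N, ∑ i : Fin n, (fderiv ℝ u x (EuclideanSpace.single i 1) γ) ^ 2 with hs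
    set c : ℝ := s / (p - 2) with hc
    set b : EuclideanSpace ℝ (Fin n) := (WithLp.equiv 2 (Fin n → ℝ)).symm
      (fun i => ∑ β : Fin N, ∑ j : Fin n,
        fderiv ℝ u x (EuclideanSpace.single j 1) β *
        fderiv ℝ (fun y => fderiv ℝ u y (EuclideanSpace.single j 1)) x
          (EuclideanSpace.single i 1) β) with hb
    set A : EuclideanSpace ℝ (Fin N) := Matrix.toEuclideanLin X b with hA
    have hAmem : A ∈ S := ⟨b, rfl⟩
    have hAcomp : ∀ α : Fin N, A α =
        ∑ β : Fin N, ∑ i : Fin n, ∑ j : Fin n,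
          fderiv ℝ u x (EuclideanSpace.single i 1) α *
          fderiv ℝ u x (EuclideanSpace.single j 1) β *
          fderiv ℝ (fun y => fderiv ℝ u y (EuclideanSpace.single j 1)) x
            (EuclideanSpace.single i 1) β := by
      intro α
      have : A α = ∑ i : Fin n, X α i *
          (∑ β : Fin N, ∑ j : Fin n,
            fderiv ℝ u x (EuclideanSpace.single j 1) β *
            fderiv ℝ (fun y => fderiv ℝ u y (EuclideanSpace.single j 1)) x
              (EuclideanSpace.single i 1) β) := rfl
      rw [this, Finset.sum_comm]
      refine Finset.sum_congr rfl fun i _ => ?_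
      rw [Finset.mul_sum]
      refine Finset.sum_congr rfl fun β _ => ?_
      rw [Finset.mul_sum]
      refine Finset.sum_congr rfl fun j _ => ?_
      simp [hX, gradMatrix]
      ring
    have hvec : A + c • L = 0 := by
      ext α
      have h := hPDE x hx α
      rw [← hAcomp α] at h
      simpa [PiLp.add_apply, PiLp.smul_apply, smul_eq_mul] using h
    have hdecomp : L = parProj X L + perpProj X L :=
      (S.starProjection_add_starProjection_orthogonal L).symm
    have hsplit : (A + c • parProj X L) + c • perpProj X L = 0 := by
      rw [add_assoc, ← smul_add, ← hdecomp]
      exact hvec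
    have hmemS : A + c • parProj X L ∈ S :=
      S.add_mem hAmem (S.smul_mem _ (Submodule.orthogonalProjectionOnto S L).2)
    have hmemSp : c • perpProj X L ∈ Sᗮ :=
      Submodule.smul_mem _ _ (Submodule.orthogonalProjectionOnto Sᗮ L).2
    have heq : A + c • parProj X L = -(c • perpProj X L) :=
      eq_neg_of_add_eq_zero_left hsplit
    have hv0 : A + c • parProj X L = 0 := by
      have hmem2 : A + c • parProj X L ∈ Sᗮ := by
        rw [heq]; exact Submodule.neg_mem _ hmemSp
      have := Submodule.inner_right_of_mem_orthogonal (𝕜 := ℝ) hmemS hmem2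
      rwa [inner_self_eq_zero] at this
    have hw0 : c • perpProj X L = 0 := by
      have := hsplit
      rw [hv0, zero_add] at this
      exact this
    constructor
    · intro α
      have h := congrArg (fun v : EuclideanSpace ℝ (Fin N) => v α) hv0
      have h2 : A α + c * parProj X L α = 0 := by
        simpa [PiLp.add_apply, PiLp.smul_apply, smul_eq_mul] using h
      rw [hAcomp α] at h2
      exact h2
    · have hsc : s = (p - 2) * c := by rw [hc]; field_simp
      rw [hsc, mul_smul, hw0, smul_zero]
  exact ⟨fun x hx => (key x hx).1, fun x hx => (key x hx).2⟩
end
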